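/- Suppose a = a_1 ⋯ a_r and b = b_1 ⋯ b_s are nonempty strings of symbols. Let T(b) denote the collection of all nonempty finite consecutive substrings of b^t for any t ≥ 1 (strings of consecutive symbols of some finite repetition of b). Then for any integers ℓ, ℓ̃ ≥ 1, f̄(a^ℓ, b^{ℓ̃}) ≥ inf{ f̄(a, c) : c ∈ T(b) }. -/

import Mathlib

open MeasureTheory

namespace Paper

variable {σ : Type*}

/-- The concatenation of `t` copies of the string `w`. -/
def rep (w : List σ) (t : ℕ) : List σ := (List.replicate t w).flatten

/-- `I` is a match between the strings `a` and `b` (with 0-based indices):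
a collection of pairs of indices, strictly increasing in both coordinates,
pairing equal symbols. -/
def IsMatch (a b : List σ) (I : List (ℕ × ℕ)) : Prop :=
  I.Chain' (fun p q => p.1 < q.1 ∧ p.2 < q.2) ∧
  ∀ p ∈ I, p.1 < a.length ∧ p.2 < b.length ∧ a[p.1]? = b[p.2]?

/-- The largest cardinality of a match between `a` and `b`. -/
noncomputable def maxMatch (a b : List σ) : ℕ :=
  sSup {r | ∃ I, IsMatch a b I ∧ I.length = r}

/-- The `f̄` distance between two strings. -/
noncomputable def fbar (a b : List σ) : ℝ :=
  1 - 2 * (maxMatch a b : ℝ) / (a.length + b.length)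

/-- `I` is an approximate match between the strings `a` and `b` (0-based indices):
pairs of indices, nondecreasing in each coordinate and strictly increasing as pairs,
pairing equal symbols, such that the set of indices paired with any given index is
contained in a set of three consecutive indices. -/
def IsApproxMatch (a b : List σ) (I : List (ℕ × ℕ)) : Prop :=
  I.Chain' (fun p q => p.1 ≤ q.1 ∧ p.2 ≤ q.2 ∧ p ≠ q) ∧
  (∀ p ∈ I, p.1 < a.length ∧ p.2 < b.length ∧ a[p.1]? = b[p.2]?) ∧
  (∀ p ∈ I, (∃ s, ∀ q ∈ I, q.1 = p.1 → q.2 ∈ ({s, s+1, s+2} : Set ℕ)) ∧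
            (∃ t, ∀ q ∈ I, q.2 = p.2 → q.1 ∈ ({t, t+1, t+2} : Set ℕ)))

/-- The largest cardinality of an approximate match between `a` and `b`. -/
noncomputable def maxApproxMatch (a b : List σ) : ℕ :=
  sSup {r | ∃ I, IsApproxMatch a b I ∧ I.length = r}

/-- The approximate distance `f̃` between two strings. -/
noncomputable def ftilde (a b : List σ) : ℝ :=
  max 0 (1 - 2 * (maxApproxMatch a b : ℝ) / (a.length + b.length))

end Paper

open Paper List

/-- `T(b)`: the collection of all nonempty finite consecutive substrings of `b^t`
for any `t ≥ 1`. -/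
def Tset {σ : Type*} (b : List σ) : Set (List σ) :=
  {c | c ≠ [] ∧ ∃ t, 1 ≤ t ∧ c <:+: Paper.rep b t}

section Aux

open Paper List

variable {σ : Type*}

private lemma chain'_mr_iff {I : List (ℕ × ℕ)} :
    I.Chain' (fun p q => p.1 < q.1 ∧ p.2 < q.2) ↔
      I.Pairwise (fun p q => p.1 < q.1 ∧ p.2 < q.2) :=
  by
    haveI : Trans (fun p q : ℕ × ℕ => p.1 < q.1 ∧ p.2 < q.2) (fun p q : ℕ × ℕ => p.1 < q.1 ∧ p.2 < q.2)
        (fun p q : ℕ × ℕ => p.1 < q.1 ∧ p.2 < q.2) :=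
      ⟨fun h1 h2 => ⟨h1.1.trans h2.1, h1.2.trans h2.2⟩⟩
    exact List.isChain_iff_pairwise

private lemma length_le_of_pairwise_lt {l : List ℕ} {n : ℕ} (h : l.Pairwise (· < ·))
    (hb : ∀ x ∈ l, x < n) : l.length ≤ n := by
  have hnd : l.Nodup := h.imp Nat.ne_of_lt
  calc l.length = l.toFinset.card := (List.toFinset_card_of_nodup hnd).symm
    _ ≤ (Finset.range n).card := Finset.card_le_card
        (fun x hx => Finset.mem_range.mpr (hb x (List.mem_toFinset.mp hx)))
    _ = n := Finset.card_range n

private lemma isMatch_nil (a b : List σ) : IsMatch a b [] := ⟨List.isChain_nil, by simp⟩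

private lemma isMatch_length_le_left {a b : List σ} {I} (h : IsMatch a b I) :
    I.length ≤ a.length := by
  have hp := (chain'_mr_iff.mp h.1).map Prod.fst (fun _ _ hr => hr.1)
  simpa using length_le_of_pairwise_lt hp
    (by rintro x hx; obtain ⟨p, hp', rfl⟩ := List.mem_map.mp hx; exact (h.2 p hp').1)

private lemma isMatch_length_le_right {a b : List σ} {I} (h : IsMatch a b I) :
    I.length ≤ b.length := by
  have hp := (chain'_mr_iff.mp h.1).map Prod.snd (fun _ _ hr => hr.2)
  simpa using length_le_of_pairwise_lt hp
    (by rintro x hx; obtain ⟨p, hp', rfl⟩ := List.mem_map.mp hx; exact (h.2 p hp').2.1)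

private lemma matchSet_bdd (a b : List σ) :
    BddAbove {r | ∃ I, IsMatch a b I ∧ I.length = r} :=
  ⟨a.length, by rintro r ⟨I, hI, rfl⟩; exact isMatch_length_le_left hI⟩

private lemma le_maxMatch {a b : List σ} {I} (h : IsMatch a b I) :
    I.length ≤ maxMatch a b :=
  le_csSup (matchSet_bdd a b) ⟨I, h, rfl⟩

private lemma exists_maxMatch (a b : List σ) :
    ∃ I, IsMatch a b I ∧ I.length = maxMatch a b := by
  have := Nat.sSup_mem (s := {r | ∃ I, IsMatch a b I ∧ I.length = r})
    ⟨0, [], isMatch_nil a b, rfl⟩ (matchSet_bdd a b)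
  obtain ⟨I, hI, hl⟩ := this
  exact ⟨I, hI, hl⟩

private lemma maxMatch_le_left (a b : List σ) : maxMatch a b ≤ a.length := by
  obtain ⟨I, hI, hM⟩ := exists_maxMatch a b; exact hM ▸ isMatch_length_le_left hI

private lemma maxMatch_le_right (a b : List σ) : maxMatch a b ≤ b.length := by
  obtain ⟨I, hI, hM⟩ := exists_maxMatch a b; exact hM ▸ isMatch_length_le_right hI

private lemma rep_length (w : List σ) (t : ℕ) : (rep w t).length = t * w.length := by
  simp [rep, List.length_flatten, List.map_replicate, List.sum_replicate, smul_eq_mul]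

private lemma rep_succ (w : List σ) (t : ℕ) : rep w (t+1) = w ++ rep w t := by
  simp [rep, List.replicate_succ]

private lemma rep_one (w : List σ) : rep w 1 = w := by simp [rep]

private lemma mediant {x y p q : ℝ} (hp : 0 < p) (hq : 0 < q) :
    min (1 - 2*x/p) (1 - 2*y/q) ≤ 1 - 2*(x+y)/(p+q) := by
  rcases le_total (x*q) (y*p) with h | h
  · refine le_trans (min_le_right _ _) ?_
    have hdiv : (x+y)/(p+q) ≤ y/q := by
      rw [div_le_div_iff₀ (by linarith) hq]; nlinarith
    rw [mul_div_assoc, mul_div_assoc]; linarith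
  · refine le_trans (min_le_left _ _) ?_
    have hdiv : (x+y)/(p+q) ≤ x/p := by
      rw [div_le_div_iff₀ (by linarith) hp]; nlinarith
    rw [mul_div_assoc, mul_div_assoc]; linarith

private lemma fbar_le_one (a c : List σ) : fbar a c ≤ 1 := by
  unfold fbar
  have h0 : (0:ℝ) ≤ 2 * (maxMatch a c : ℝ) / ((a.length : ℝ) + c.length) := by positivity
  linarith

private lemma fbar_nonneg (a c : List σ) : 0 ≤ fbar a c := by
  unfold fbar
  rcases Nat.eq_zero_or_pos (a.length + c.length) with h | h
  · obtain ⟨h1, h2⟩ := Nat.add_eq_zero.mp h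
    norm_num [h1, h2]
  · have hd : (0:ℝ) < (a.length : ℝ) + c.length := by exact_mod_cast h
    rw [sub_nonneg, div_le_one hd]
    have hle : 2 * maxMatch a c ≤ a.length + c.length := by
      have := maxMatch_le_left a c; have := maxMatch_le_right a c; omega
    exact_mod_cast hle

private lemma fbar_nil_right (a : List σ) : fbar a [] = 1 := by
  have h0 : maxMatch a [] = 0 := Nat.le_zero.mp (maxMatch_le_right a [])
  simp [fbar, h0]

private lemma fbar_le_of_le {a c : List σ} {m : ℕ} (hm : m ≤ maxMatch a c)
    (hpos : 0 < a.length + c.length) :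
    fbar a c ≤ 1 - 2 * (m:ℝ) / ((a.length : ℝ) + c.length) := by
  unfold fbar
  have hd : (0:ℝ) < (a.length : ℝ) + c.length := by exact_mod_cast hpos
  have hmr : (m:ℝ) ≤ (maxMatch a c : ℝ) := by exact_mod_cast hm
  have : 2*(m:ℝ)/((a.length : ℝ) + c.length) ≤
      2*(maxMatch a c : ℝ)/((a.length : ℝ) + c.length) := by gcongr
  linarith

private lemma head_dropWhile_not {α : Type*} (p : α → Bool) (l : List α) {x : α}
    {xs : List α} (h : l.dropWhile p = x :: xs) : ¬ p x := by
  have := List.dropWhile_get_zero_not (p := p) l (by rw [h]; simp)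
  simpa [h] using this

private lemma isMatch_take {a a' d : List σ} {I I' : List (ℕ×ℕ)} {k : ℕ}
    (h : IsMatch (a ++ a') d I) (hsub : I' <+ I)
    (h1 : ∀ p ∈ I', p.1 < a.length) (h2 : ∀ p ∈ I', p.2 < k) :
    IsMatch a (d.take k) I' := by
  constructor
  · exact chain'_mr_iff.mpr (List.Pairwise.sublist hsub (chain'_mr_iff.mp h.1))
  · intro p hp
    obtain ⟨hp1, hp2, hp3⟩ := h.2 p (hsub.subset hp)
    refine ⟨h1 p hp, ?_, ?_⟩
    · rw [List.length_take]; have := h2 p hp; omega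
    · rw [List.getElem?_take, if_pos (h2 p hp), ← hp3, List.getElem?_append,
        if_pos (h1 p hp)]

private lemma isMatch_drop {a a' d : List σ} {I I' : List (ℕ×ℕ)} {k : ℕ}
    (h : IsMatch (a ++ a') d I) (hsub : I' <+ I)
    (h1 : ∀ p ∈ I', a.length ≤ p.1) (h2 : ∀ p ∈ I', k ≤ p.2) :
    IsMatch a' (d.drop k) (I'.map fun p => (p.1 - a.length, p.2 - k)) := by
  constructor
  · apply chain'_mr_iff.mpr
    rw [List.pairwise_map]
    refine List.Pairwise.imp_of_mem ?_ (List.Pairwise.sublist hsub (chain'_mr_iff.mp h.1))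
    intro p q hp hq hr
    have ha1 := h1 p hp
    have ha2 := h2 p hp
    have hr1 := hr.1
    have hr2 := hr.2
    exact ⟨by omega, by omega⟩
  · intro p' hp'
    obtain ⟨p, hp, rfl⟩ := List.mem_map.mp hp'
    obtain ⟨hp1, hp2, hp3⟩ := h.2 p (hsub.subset hp)
    have hn := h1 p hp
    have hk := h2 p hp
    rw [List.length_append] at hp1
    refine ⟨?_, ?_, ?_⟩
    · show p.1 - a.length < a'.length; omega
    · show p.2 - k < (d.drop k).length; rw [List.length_drop]; omega
    · show a'[p.1 - a.length]? = (d.drop k)[p.2 - k]?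
      rw [List.getElem?_drop, Nat.add_sub_cancel' hk, ← hp3,
        List.getElem?_append_right hn]

end Aux

private lemma key_lemma {σ : Type*} (a b : List σ) (ha : a ≠ []) (hb : b ≠ []) :
    ∀ n : ℕ, ∀ d : List σ, (∃ t, 1 ≤ t ∧ d <:+: rep b t) →
    sInf {x : ℝ | ∃ c ∈ Tset b, x = fbar a c} ≤ fbar (rep a (n+1)) d := by
  set S := {x : ℝ | ∃ c ∈ Tset b, x = fbar a c} with hSdef
  have hbdd : BddBelow S := ⟨0, by rintro x ⟨c, hc, rfl⟩; exact fbar_nonneg a c⟩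
  have hSle : ∀ c ∈ Tset b, sInf S ≤ fbar a c := fun c hc => csInf_le hbdd ⟨c, hc, rfl⟩
  have hS1 : sInf S ≤ 1 :=
    (hSle b ⟨hb, 1, le_refl 1, by rw [rep_one]⟩).trans (fbar_le_one a b)
  have hna : 0 < a.length := List.length_pos_iff.mpr ha
  intro n
  induction n with
  | zero =>
    rintro d ⟨t, ht, hd⟩
    rcases eq_or_ne d [] with rfl | hdne
    · rw [fbar_nil_right]; exact hS1
    · show sInf S ≤ fbar (rep a 1) d
      rw [rep_one]
      exact hSle d ⟨hdne, t, ht, hd⟩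
  | succ n ih =>
    rintro d ⟨t, ht, hd⟩
    rcases eq_or_ne d [] with rfl | hdne
    · rw [fbar_nil_right]; exact hS1
    obtain ⟨I, hI, hM⟩ := exists_maxMatch (rep a (n+1+1)) d
    rw [rep_succ] at hI
    -- split the match at the boundary between the first copy of `a` and the rest
    set P : ℕ × ℕ → Bool := fun p => decide (p.1 < a.length) with hPdef
    have hsplit : I.takeWhile P ++ I.dropWhile P = I := List.takeWhile_append_dropWhile
    set I₁ := I.takeWhile P with hI₁def
    set I₂ := I.dropWhile P with hI₂def
    have hsub1 : I₁ <+ I := List.takeWhile_sublist P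
    have hsub2 : I₂ <+ I := List.dropWhile_sublist P
    have hpw : (I₁ ++ I₂).Pairwise (fun p q => p.1 < q.1 ∧ p.2 < q.2) := by
      rw [hsplit]; exact chain'_mr_iff.mp hI.1
    rw [List.pairwise_append] at hpw
    obtain ⟨hpw1, hpw2, hpw12⟩ := hpw
    have hmem1 : ∀ p ∈ I₁, p.1 < a.length := by
      intro p hp
      have := List.mem_takeWhile_imp hp
      simpa [hPdef] using this
    -- choose the cut index k in d
    obtain ⟨k, hkd, hk1, hk2, hn2⟩ :
        ∃ k, k ≤ d.length ∧ (∀ p ∈ I₁, p.2 < k) ∧ (∀ p ∈ I₂, k ≤ p.2) ∧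
          (∀ p ∈ I₂, a.length ≤ p.1) := by
      rcases hc : I₂ with _ | ⟨q0, I₂'⟩
      · refine ⟨d.length, le_rfl, fun p hp => (hI.2 p (hsub1.subset hp)).2.1,
          by simp [hc], by simp [hc]⟩
      · have hq0 : ¬ P q0 := head_dropWhile_not P I (hI₂def ▸ hc)
        have hq0' : a.length ≤ q0.1 := by simpa [hPdef] using hq0
        have hq0mem : q0 ∈ I₂ := by rw [hc]; exact List.mem_cons_self
        have hq0d : q0.2 < d.length := (hI.2 q0 (hsub2.subset hq0mem)).2.1
        rw [hc] at hpw2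
        rw [List.pairwise_cons] at hpw2
        refine ⟨q0.2, by omega, fun p hp => (hpw12 p hp q0 hq0mem).2, ?_, ?_⟩
        · intro p hp
          rcases List.mem_cons.mp hp with rfl | hp'
          · exact le_rfl
          · exact le_of_lt (hpw2.1 p hp').2
        · intro p hp
          rcases List.mem_cons.mp hp with rfl | hp'
          · exact hq0'
          · exact le_trans hq0' (le_of_lt (hpw2.1 p hp').1)
    -- the two sub-matches
    have hIM1 : IsMatch a (d.take k) I₁ := isMatch_take hI hsub1 hmem1 hk1
    have hIM2 : IsMatch (rep a (n+1)) (d.drop k)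
        (I₂.map fun p => (p.1 - a.length, p.2 - k)) := isMatch_drop hI hsub2 hn2 hk2
    have hM1 : I₁.length ≤ maxMatch a (d.take k) := le_maxMatch hIM1
    have hM2 : I₂.length ≤ maxMatch (rep a (n+1)) (d.drop k) := by
      have := le_maxMatch hIM2
      simpa using this
    have hlen12 : I₁.length + I₂.length = I.length := by
      rw [← hsplit, List.length_append]
    set m₂ := d.length - k with hm₂def
    have hm₂ : k + m₂ = d.length := by omega
    have hd1len : (d.take k).length = k := by rw [List.length_take]; omega
    have hd2len : (d.drop k).length = m₂ := by rw [List.length_drop]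
    have hnar : (0:ℝ) < (a.length : ℝ) := by exact_mod_cast hna
    -- bound 1
    have B1 : sInf S ≤ 1 - 2*(I₁.length : ℝ)/((a.length : ℝ) + (k:ℝ)) := by
      rcases Nat.eq_zero_or_pos k with hk0 | hk0
      · have hI1nil : I₁ = [] := by
          refine List.eq_nil_iff_forall_not_mem.mpr fun p hp => ?_
          have := hk1 p hp; omega
        rw [hI1nil, hk0]
        simpa using hS1
      · have hd1ne : d.take k ≠ [] := by
          intro hcon
          have := hd1len
          rw [hcon] at this
          simp at this
          omega
        have hTs : d.take k ∈ Tset b :=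
          ⟨hd1ne, t, ht, (List.take_prefix k d).isInfix.trans hd⟩
        refine (hSle _ hTs).trans ?_
        have := fbar_le_of_le hM1 (by omega)
        rwa [hd1len] at this
    -- bound 2
    have B2 : sInf S ≤ 1 - 2*(I₂.length : ℝ)/(((n:ℝ)+1)*(a.length : ℝ) + (m₂:ℝ)) := by
      refine (ih (d.drop k) ⟨t, ht, (List.drop_suffix k d).isInfix.trans hd⟩).trans ?_
      have hpos2 : 0 < (rep a (n+1)).length + (d.drop k).length := by
        rw [rep_length]; positivity
      have := fbar_le_of_le hM2 hpos2
      rw [rep_length, hd2len] at this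
      convert this using 3
      · rfl
      push_cast
      ring
    -- combine via the mediant inequality
    have hp : (0:ℝ) < (a.length : ℝ) + (k:ℝ) := by positivity
    have hq : (0:ℝ) < ((n:ℝ)+1)*(a.length : ℝ) + (m₂:ℝ) := by positivity
    have hmed := mediant (x := (I₁.length : ℝ)) (y := (I₂.length : ℝ)) hp hq
    have hfb : fbar (rep a (n+1+1)) d =
        1 - 2*((I₁.length : ℝ) + (I₂.length : ℝ))/
          (((a.length : ℝ) + (k:ℝ)) + (((n:ℝ)+1)*(a.length : ℝ) + (m₂:ℝ))) := by
      rw [fbar, ← hM, ← hlen12, rep_length]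
      have hdl : (d.length : ℝ) = (k:ℝ) + (m₂:ℝ) := by exact_mod_cast hm₂.symm
      rw [hdl]
      push_cast
      ring_nf
    rw [hfb]
    exact le_trans (le_min B1 B2) hmed

/-- **Repeated substring matching lemma.** For nonempty strings `a` and `b`
and any `ℓ, ℓ̃ ≥ 1`, `f̄(a^ℓ, b^ℓ̃) ≥ inf{f̄(a, c) : c ∈ T(b)}`. -/
theorem statement8 {σ : Type*} (a b : List σ) (ha : a ≠ []) (hb : b ≠ [])
    (l lt : ℕ) (hl : 1 ≤ l) (hlt : 1 ≤ lt) :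
    sInf {x : ℝ | ∃ c ∈ Tset b, x = fbar a c} ≤ fbar (Paper.rep a l) (Paper.rep b lt) := by
  obtain ⟨n, rfl⟩ : ∃ n, l = n + 1 := ⟨l - 1, by omega⟩
  exact key_lemma a b ha hb n (rep b lt) ⟨lt, hlt, List.infix_rfl⟩
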